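/- In the module V with operators B₂ = t B₂⁽⁰⁾ + B₂⁽¹⁾ q^{−D−1} as above, and defining U_v^{(ε)} := B₂^{(v₁)} ⋯ B₂^{(v_k)} H_ε for v ∈ {0,1}^k and H_ε := (q;q)_ε S_ε, the identity B₂^ℓ (∑_{v ∈ {0,1}^m} U_v^{(ε)}) = ∑_{v ∈ {0,1}^{m+ℓ}} q^{(1−d)|v|_ℓ + 2n(v)_ℓ} t^{ℓ − |v|_ℓ} U_v^{(ε)} holds, where d = 2m + 2ℓ + ε, |v|_ℓ = v₁ + ⋯ + v_ℓ, and n(v)_ℓ = v₂ + 2v₃ + ⋯ + (ℓ−1)v_ℓ. -/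

import Mathlib

/- The field ℚ(q,t): rational functions in t over the field ℚ(q). -/
noncomputable abbrev K : Type := RatFunc (RatFunc ℚ)
noncomputable def q : K := RatFunc.C RatFunc.X
noncomputable def t : K := RatFunc.X

/- The free ℚ(q,t)-module with basis indexed by pairs (m, n). -/
noncomputable abbrev V : Type := (ℕ × ℕ) →₀ K

noncomputable def S (m n : ℕ) : V := if n ≤ m then Finsupp.single (m, n) 1 else 0

/-- The Pieri product `S_a · S_b = ∑_{ℓ=0}^{b} S_{a+b-ℓ, ℓ}` (for a ≥ b). -/
noncomputable def P (a b : ℕ) : V := ∑ ℓ ∈ Finset.range (b + 1), S (a + b - ℓ) ℓ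

/-- `B₂⁽⁰⁾` on the basis. -/
noncomputable def B0 : V →ₗ[K] V :=
  Finsupp.lift V K (ℕ × ℕ) fun p =>
    (-q ^ (p.1 + 1) * (1 - q ^ (p.2 + 1))) • P (p.1 + 1) (p.2 + 1)
      + (q ^ p.2 * (1 - q ^ (p.1 + 2))) • P (p.1 + 2) p.2

/-- `B₂⁽¹⁾` on the basis. -/
noncomputable def B1 : V →ₗ[K] V :=
  Finsupp.lift V K (ℕ × ℕ) fun p =>
    q ^ (p.1 + p.2 + 1) •
      ((1 - q ^ (p.2 + 1)) • P (p.1 + 1) (p.2 + 1)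
        - (1 - q ^ (p.1 + 2)) • P (p.1 + 2) p.2)

/-- The diagonal operator `q^{-D-1}`: multiplies the basis vector of degree d by `q^{-d-1}`. -/
noncomputable def Qinv : V →ₗ[K] V :=
  Finsupp.lift V K (ℕ × ℕ) fun p => (q ^ (p.1 + p.2 + 1))⁻¹ • (Finsupp.single p 1 : V)

/-- The creation operator `B₂ = t B₂⁽⁰⁾ + B₂⁽¹⁾ q^{-D-1}`. -/
noncomputable def B2 : V →ₗ[K] V := t • B0 + B1 ∘ₗ Qinv

/-- The q-shifted factorial `(q;q)_k`. -/
noncomputable def qPoch (k : ℕ) : K := ∏ i ∈ Finset.range k, (1 - q ^ (i + 1))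

/-- `H_ε = (q;q)_ε S_ε`. -/
noncomputable def H (k : ℕ) : V := qPoch k • S k 0

/-- `U_v^{(ε)} = B₂^{(v₁)} ⋯ B₂^{(v_k)} H_ε`, with `false ↦ B₂⁽⁰⁾` and `true ↦ B₂⁽¹⁾`. -/
noncomputable def U : List Bool → ℕ → V
  | [], ε => H ε
  | b :: v, ε => (if b then B1 else B0) (U v ε)

/-- `|v|_ℓ = v₁ + ⋯ + v_ℓ`. -/
def vAbs (k ℓ : ℕ) (v : Fin k → Bool) : ℕ :=
  ∑ i : Fin k, if i.val < ℓ ∧ v i = true then 1 else 0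

/-- `n(v)_ℓ = v₂ + 2v₃ + ⋯ + (ℓ-1)v_ℓ`. -/
def vN (k ℓ : ℕ) (v : Fin k → Bool) : ℕ :=
  ∑ i : Fin k, if i.val < ℓ ∧ v i = true then i.val else 0

lemma q_ne_zero : q ≠ 0 := by
  simp [q, RatFunc.X_ne_zero]

noncomputable def homog (d : ℕ) : Submodule K V := Finsupp.supported K K {p : ℕ × ℕ | p.1 + p.2 = d}

lemma S_mem_homog (a b : ℕ) : S a b ∈ homog (a + b) := by
  unfold S
  split
  · exact Finsupp.single_mem_supported K 1 rfl
  · exact zero_mem _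

lemma P_mem_homog (a b : ℕ) : P a b ∈ homog (a + b) := by
  refine Submodule.sum_mem _ fun ℓ hℓ => ?_
  have hle : ℓ ≤ a + b := le_trans (Nat.lt_succ_iff.mp (Finset.mem_range.mp hℓ)) (Nat.le_add_left _ _)
  have := S_mem_homog (a + b - ℓ) ℓ
  rwa [Nat.sub_add_cancel hle] at this

lemma lift_single (f : ℕ × ℕ → V) (p : ℕ × ℕ) :
    (Finsupp.lift V K (ℕ × ℕ) f) (Finsupp.single p 1) = f p := by
  rw [Finsupp.lift_apply, Finsupp.sum_single_index (by simp), one_smul]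

lemma B0_mem_homog {d : ℕ} {x : V} (hx : x ∈ homog d) : B0 x ∈ homog (d + 2) := by
  rw [homog, Finsupp.supported_eq_span_single] at hx
  induction hx using Submodule.span_induction with
  | mem y hy =>
    obtain ⟨p, hp, rfl⟩ := hy
    rw [B0, lift_single]
    refine add_mem (Submodule.smul_mem _ _ ?_) (Submodule.smul_mem _ _ ?_)
    · have := P_mem_homog (p.1 + 1) (p.2 + 1)
      have h2 : p.1 + 1 + (p.2 + 1) = d + 2 := by
        have : p.1 + p.2 = d := hp
        omega
      rwa [h2] at this
    · have := P_mem_homog (p.1 + 2) p.2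
      have h2 : p.1 + 2 + p.2 = d + 2 := by
        have : p.1 + p.2 = d := hp
        omega
      rwa [h2] at this
  | zero => simp
  | add x y _ _ hx hy => rw [map_add]; exact add_mem hx hy
  | smul c x _ hx => rw [map_smul]; exact Submodule.smul_mem _ _ hx

lemma B1_mem_homog {d : ℕ} {x : V} (hx : x ∈ homog d) : B1 x ∈ homog (d + 2) := by
  rw [homog, Finsupp.supported_eq_span_single] at hx
  induction hx using Submodule.span_induction with
  | mem y hy =>
    obtain ⟨p, hp, rfl⟩ := hy
    rw [B1, lift_single]
    refine Submodule.smul_mem _ _ (sub_mem (Submodule.smul_mem _ _ ?_) (Submodule.smul_mem _ _ ?_))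
    · have := P_mem_homog (p.1 + 1) (p.2 + 1)
      have h2 : p.1 + 1 + (p.2 + 1) = d + 2 := by
        have : p.1 + p.2 = d := hp
        omega
      rwa [h2] at this
    · have := P_mem_homog (p.1 + 2) p.2
      have h2 : p.1 + 2 + p.2 = d + 2 := by
        have : p.1 + p.2 = d := hp
        omega
      rwa [h2] at this
  | zero => simp
  | add x y _ _ hx hy => rw [map_add]; exact add_mem hx hy
  | smul c x _ hx => rw [map_smul]; exact Submodule.smul_mem _ _ hx

lemma Qinv_homog {d : ℕ} {x : V} (hx : x ∈ homog d) : Qinv x = (q ^ (d + 1))⁻¹ • x := by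
  rw [homog, Finsupp.supported_eq_span_single] at hx
  induction hx using Submodule.span_induction with
  | mem y hy =>
    obtain ⟨p, hp, rfl⟩ := hy
    rw [Qinv, lift_single]
    have : p.1 + p.2 = d := hp
    rw [this]
  | zero => simp
  | add x y _ _ hx hy => rw [map_add, hx, hy, smul_add]
  | smul c x _ hx => rw [map_smul, hx, smul_comm]

lemma U_mem_homog (l : List Bool) (ε : ℕ) : U l ε ∈ homog (2 * l.length + ε) := by
  induction l with
  | nil =>
    have := S_mem_homog ε 0
    simp only [Nat.add_zero] at this
    simpa [U, H] using Submodule.smul_mem _ _ this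
  | cons b l ih =>
    have h2 : 2 * (b :: l).length + ε = (2 * l.length + ε) + 2 := by
      simp [List.length_cons]; ring
    rw [h2]
    show (if b then B1 else B0) (U l ε) ∈ _
    cases b
    · simpa using B0_mem_homog ih
    · simpa using B1_mem_homog ih

lemma B2_U (l : List Bool) (ε : ℕ) :
    B2 (U l ε) = t • U (false :: l) ε
      + (q ^ (2 * l.length + ε + 1))⁻¹ • U (true :: l) ε := by
  have hq := Qinv_homog (U_mem_homog l ε)
  rw [B2]
  simp only [LinearMap.add_apply, LinearMap.smul_apply, LinearMap.comp_apply, hq, map_smul]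
  rfl

lemma vAbs_cons (k ℓ : ℕ) (b : Bool) (v : Fin k → Bool) :
    vAbs (k + 1) (ℓ + 1) (Fin.cons b v) = (if b then 1 else 0) + vAbs k ℓ v := by
  rw [vAbs, Fin.sum_univ_succ]
  simp only [Fin.cons_zero, Fin.cons_succ, Fin.val_zero, Fin.val_succ,
    Nat.add_lt_add_iff_right, Nat.zero_lt_succ, true_and]
  rw [vAbs]

lemma vN_cons (k ℓ : ℕ) (b : Bool) (v : Fin k → Bool) :
    vN (k + 1) (ℓ + 1) (Fin.cons b v) = vN k ℓ v + vAbs k ℓ v := by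
  rw [vN, Fin.sum_univ_succ]
  simp only [Fin.cons_zero, Fin.cons_succ, Fin.val_zero, Fin.val_succ,
    Nat.add_lt_add_iff_right, if_neg, ite_self]
  rw [vN, vAbs, ← Finset.sum_add_distrib, zero_add]
  refine Finset.sum_congr rfl fun i _ => ?_
  split <;> simp

lemma vAbs_le (k ℓ : ℕ) (v : Fin k → Bool) : vAbs k ℓ v ≤ ℓ := by
  have h1 : vAbs k ℓ v ≤ ∑ i : Fin k, if i.val < ℓ then 1 else 0 := by
    refine Finset.sum_le_sum fun i _ => ?_
    split <;> split <;> simp_all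
  refine h1.trans ?_
  rw [← Finset.card_filter]
  calc (Finset.univ.filter fun i : Fin k => i.val < ℓ).card
      ≤ (Finset.range ℓ).card := by
        refine Finset.card_le_card_of_injOn Fin.val (fun i hi => ?_)
          (fun a _ b _ h => Fin.val_injective h)
        simp only [Finset.mem_coe, Finset.mem_filter] at hi
        exact Finset.mem_range.mpr hi.2
    _ = ℓ := Finset.card_range ℓ

lemma ofFn_cons {k : ℕ} (b : Bool) (v : Fin k → Bool) :
    List.ofFn (Fin.cons b v) = b :: List.ofFn v := by
  rw [List.ofFn_succ]
  simp

/-- Proposition 8 of the paper: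
`B₂^ℓ (∑_{v ∈ {0,1}^m} U_v^{(ε)})
  = ∑_{v ∈ {0,1}^{m+ℓ}} q^{(1-d)|v|_ℓ + 2 n(v)_ℓ} t^{ℓ - |v|_ℓ} U_v^{(ε)}`,
where `d = 2m + 2ℓ + ε`. -/
theorem B2_pow_sum_U (m ℓ ε : ℕ) (hε : ε ≤ 1) :
    (B2 ^ ℓ : Module.End K V) (∑ v : Fin m → Bool, U (List.ofFn v) ε)
      = ∑ v : Fin (m + ℓ) → Bool,
          (q ^ ((1 - (2 * m + 2 * ℓ + ε : ℤ)) * (vAbs (m + ℓ) ℓ v : ℤ)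
              + 2 * (vN (m + ℓ) ℓ v : ℤ))
            * t ^ (ℓ - vAbs (m + ℓ) ℓ v)) • U (List.ofFn v) ε := by
  induction ℓ with
  | zero =>
    simp [vAbs, vN]
  | succ ℓ ih =>
    rw [pow_succ', Module.End.mul_apply, ih, map_sum]
    refine Eq.trans ?_ (Fintype.sum_equiv (Fin.consEquiv (fun _ : Fin (m + ℓ + 1) => Bool))
      (fun p : Bool × (Fin (m + ℓ) → Bool) =>
        (q ^ ((1 - (2 * m + 2 * (ℓ + 1) + ε : ℤ))
              * (vAbs (m + (ℓ + 1)) (ℓ + 1) (Fin.cons p.1 p.2) : ℤ)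
            + 2 * (vN (m + (ℓ + 1)) (ℓ + 1) (Fin.cons p.1 p.2) : ℤ))
          * t ^ ((ℓ + 1) - vAbs (m + (ℓ + 1)) (ℓ + 1) (Fin.cons p.1 p.2)))
          • U (List.ofFn (Fin.cons p.1 p.2)) ε) _ (fun p => rfl))
    rw [Fintype.sum_prod_type, Fintype.sum_bool, ← Finset.sum_add_distrib]
    refine Finset.sum_congr rfl fun v _ => ?_
    rw [show (vAbs (m + (ℓ + 1)) (ℓ + 1) (Fin.cons true v) : ℕ)
        = 1 + vAbs (m + ℓ) ℓ v from (vAbs_cons (m + ℓ) ℓ true v).trans (by simp)]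
    rw [show (vAbs (m + (ℓ + 1)) (ℓ + 1) (Fin.cons false v) : ℕ)
        = vAbs (m + ℓ) ℓ v from (vAbs_cons (m + ℓ) ℓ false v).trans (by simp)]
    rw [show (vN (m + (ℓ + 1)) (ℓ + 1) (Fin.cons true v) : ℕ)
        = vN (m + ℓ) ℓ v + vAbs (m + ℓ) ℓ v from vN_cons (m + ℓ) ℓ true v]
    rw [show (vN (m + (ℓ + 1)) (ℓ + 1) (Fin.cons false v) : ℕ)
        = vN (m + ℓ) ℓ v + vAbs (m + ℓ) ℓ v from vN_cons (m + ℓ) ℓ false v]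
    rw [ofFn_cons, ofFn_cons]
    set a := vAbs (m + ℓ) ℓ v with ha
    set n := vN (m + ℓ) ℓ v with hn
    have hale : a ≤ ℓ := vAbs_le _ _ _
    have e1 : q ^ ((1 - (2 * m + 2 * (ℓ + 1) + ε : ℤ)) * ((1 + a : ℕ) : ℤ)
            + 2 * ((n + a : ℕ) : ℤ)) * t ^ (ℓ + 1 - (1 + a))
        = (q ^ ((1 - (2 * m + 2 * ℓ + ε : ℤ)) * (a : ℤ) + 2 * (n : ℤ)) * t ^ (ℓ - a))
            * (q ^ (2 * (m + ℓ) + ε + 1))⁻¹ := by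
      have h1 : ((1 : ℤ) - (2 * m + 2 * (ℓ + 1) + ε)) * ((1 + a : ℕ) : ℤ)
            + 2 * ((n + a : ℕ) : ℤ)
          = ((1 - (2 * m + 2 * ℓ + ε : ℤ)) * (a : ℤ) + 2 * (n : ℤ))
            + (-((2 * (m + ℓ) + ε + 1 : ℕ) : ℤ)) := by
        push_cast; ring
      rw [h1, zpow_add₀ q_ne_zero, zpow_neg, zpow_natCast,
        show ℓ + 1 - (1 + a) = ℓ - a from by omega]
      ring
    have e2 : q ^ ((1 - (2 * m + 2 * (ℓ + 1) + ε : ℤ)) * (a : ℤ)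
            + 2 * ((n + a : ℕ) : ℤ)) * t ^ (ℓ + 1 - a)
        = (q ^ ((1 - (2 * m + 2 * ℓ + ε : ℤ)) * (a : ℤ) + 2 * (n : ℤ)) * t ^ (ℓ - a)) * t := by
      have h1 : ((1 : ℤ) - (2 * m + 2 * (ℓ + 1) + ε)) * (a : ℤ) + 2 * ((n + a : ℕ) : ℤ)
          = (1 - (2 * m + 2 * ℓ + ε : ℤ)) * (a : ℤ) + 2 * (n : ℤ) := by
        push_cast; ring
      rw [h1, show ℓ + 1 - a = (ℓ - a) + 1 from by omega, pow_succ]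
      ring
    rw [e1, e2, map_smul, B2_U, List.length_ofFn, smul_add, smul_smul, smul_smul]
    exact add_comm _ _
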